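/- Let f : ℝⁿ → ℝ be differentiable and g : ℝⁿ → ℝ ∪ {∞} be proper, lower semicontinuous, and convex. Let γₖ, γₖ₊₁ > 0, define Hₖ = id − γₖ∇f, and suppose xᵏ = prox_{γₖ g}(Hₖ(xᵏ⁻¹)) and xᵏ⁺¹ = prox_{γₖ₊₁ g}(xᵏ − γₖ₊₁∇f(xᵏ)). Then with ρₖ₊₁ = γₖ₊₁/γₖ, one has ‖xᵏ⁺¹ − xᵏ‖² ≤ ρₖ₊₁⟨Hₖ(xᵏ⁻¹) − Hₖ(xᵏ), xᵏ − xᵏ⁺¹⟩ ≤ ρₖ₊₁²‖Hₖ(xᵏ⁻¹) − Hₖ(xᵏ)‖². -/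

import Mathlib

open scoped RealInnerProductSpace

noncomputable section

/-- `g` is a proper extended-real-valued function. -/
def EProper {n : ℕ} (g : EuclideanSpace ℝ (Fin n) → EReal) : Prop :=
  (∀ x, g x ≠ ⊥) ∧ ∃ x, g x ≠ ⊤

/-- Convexity for an extended-real-valued function. -/
def EConvexOn {n : ℕ} (g : EuclideanSpace ℝ (Fin n) → EReal) : Prop :=
  ∀ x y : EuclideanSpace ℝ (Fin n), ∀ a b : ℝ, 0 ≤ a → 0 ≤ b → a + b = 1 →
    g (a • x + b • y) ≤ (a : EReal) * g x + (b : EReal) * g y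

/-- `p = prox_{γ g}(y)`: `p` minimizes `z ↦ g z + ‖z - y‖² / (2γ)`. -/
def IsProx {n : ℕ} (g : EuclideanSpace ℝ (Fin n) → EReal) (γ : ℝ)
    (y p : EuclideanSpace ℝ (Fin n)) : Prop :=
  ∀ z, g p + ((1 / (2 * γ) * ‖p - y‖ ^ 2 : ℝ) : EReal)
      ≤ g z + ((1 / (2 * γ) * ‖z - y‖ ^ 2 : ℝ) : EReal)

lemma prox_subgrad {n : ℕ} {g : EuclideanSpace ℝ (Fin n) → EReal}
    (hgc : EConvexOn g) {γ : ℝ} (hγ : 0 < γ)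
    {y p z : EuclideanSpace ℝ (Fin n)} (h : IsProx g γ y p)
    {gp gz : ℝ} (hp : g p = gp) (hz : g z = gz) :
    γ * (gp - gz) ≤ ⟪p - y, z - p⟫ := by
  have key : ∀ t : ℝ, 0 < t → t ≤ 1 →
      γ * (gp - gz) ≤ ⟪p - y, z - p⟫ + t / 2 * ‖z - p‖ ^ 2 := by
    intro t ht ht1
    have hc := hgc p z (1 - t) t (by linarith) ht.le (by ring)
    rw [hp, hz] at hc
    have hc' : g ((1 - t) • p + t • z) ≤ (((1 - t) * gp + t * gz : ℝ) : EReal) := by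
      rw [EReal.coe_add, EReal.coe_mul, EReal.coe_mul] at *; exact hc
    have hpr := h ((1 - t) • p + t • z)
    rw [hp] at hpr
    have hpr2 : ((gp + 1 / (2 * γ) * ‖p - y‖ ^ 2 : ℝ) : EReal)
        ≤ (((1 - t) * gp + t * gz + 1 / (2 * γ) * ‖(1 - t) • p + t • z - y‖ ^ 2 : ℝ) : EReal) := by
      push_cast
      calc ((gp : EReal) + ((1 / (2 * γ) * ‖p - y‖ ^ 2 : ℝ) : EReal)) ≤ _ := hpr
        _ ≤ _ := by
          have := add_le_add hc' (le_refl (((1 / (2 * γ) * ‖(1 - t) • p + t • z - y‖ ^ 2 : ℝ) : EReal)))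
          push_cast at this ⊢
          exact this
    have hr : gp + 1 / (2 * γ) * ‖p - y‖ ^ 2
        ≤ (1 - t) * gp + t * gz + 1 / (2 * γ) * ‖(1 - t) • p + t • z - y‖ ^ 2 :=
      EReal.coe_le_coe_iff.mp hpr2
    have hzt : (1 - t) • p + t • z - y = (p - y) + t • (z - p) := by
      module
    have hnorm : ‖(1 - t) • p + t • z - y‖ ^ 2
        = ‖p - y‖ ^ 2 + 2 * t * ⟪p - y, z - p⟫ + t ^ 2 * ‖z - p‖ ^ 2 := by
      rw [hzt, norm_add_sq_real, real_inner_smul_right, norm_smul]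
      simp [mul_pow]
      ring
    rw [hnorm] at hr
    set c : ℝ := 1 / (2 * γ) with hcdef
    have hc1 : c * (2 * γ) = 1 := by
      rw [hcdef]; field_simp
    set I : ℝ := ⟪p - y, z - p⟫ with hIdef
    set N : ℝ := ‖z - p‖ ^ 2 with hNdef
    have e1 : t * (gp - gz) ≤ t * (2 * c * I + c * t * N) := by nlinarith [hr]
    have e2 : gp - gz ≤ 2 * c * I + c * t * N := le_of_mul_le_mul_left e1 ht
    nlinarith [mul_le_mul_of_nonneg_left e2 hγ.le, hc1]
  by_contra hcon
  push_neg at hcon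
  set ε := γ * (gp - gz) - ⟪p - y, z - p⟫ with hε
  have hεpos : 0 < ε := by linarith
  have hq : 0 < ‖z - p‖ ^ 2 + 1 := by positivity
  set t := min 1 (ε / (‖z - p‖ ^ 2 + 1)) with htdef
  have ht0 : 0 < t := lt_min one_pos (div_pos hεpos hq)
  have ht1 : t ≤ 1 := min_le_left _ _
  have hk := key t ht0 ht1
  have : t / 2 * ‖z - p‖ ^ 2 < ε := by
    have h1 : t ≤ ε / (‖z - p‖ ^ 2 + 1) := min_le_right _ _
    have h2 : t * ‖z - p‖ ^ 2 ≤ ε / (‖z - p‖ ^ 2 + 1) * ‖z - p‖ ^ 2 :=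
      mul_le_mul_of_nonneg_right h1 (by positivity)
    have h3 : ε / (‖z - p‖ ^ 2 + 1) * ‖z - p‖ ^ 2 < ε := by
      rw [div_mul_eq_mul_div, div_lt_iff₀ hq]
      nlinarith
    nlinarith
  linarith

lemma prox_finite {n : ℕ} {g : EuclideanSpace ℝ (Fin n) → EReal}
    (hgp : EProper g) {γ : ℝ} {y p : EuclideanSpace ℝ (Fin n)}
    (h : IsProx g γ y p) : ∃ r : ℝ, g p = (r : EReal) := by
  obtain ⟨hbot, x0, hx0⟩ := hgp
  have := h x0
  obtain ⟨r0, hr0⟩ : ∃ r0 : ℝ, g x0 = (r0 : EReal) :=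
    ⟨(g x0).toReal, (EReal.coe_toReal hx0 (hbot x0)).symm⟩
  have htop : g p ≠ ⊤ := by
    intro hT
    rw [hT, hr0, EReal.top_add_coe, ← EReal.coe_add, top_le_iff] at this
    exact EReal.coe_ne_top _ this
  exact ⟨(g p).toReal, (EReal.coe_toReal htop (hbot p)).symm⟩

/-- FNE-like inequality for proximal gradient iterates with time-varying stepsizes. -/
theorem stmt0 {n : ℕ} (f : EuclideanSpace ℝ (Fin n) → ℝ)
    (g : EuclideanSpace ℝ (Fin n) → EReal)
    (hf : Differentiable ℝ f) (hgp : EProper g) (hglsc : LowerSemicontinuous g)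
    (hgc : EConvexOn g)
    (γk γk1 : ℝ) (hγk : 0 < γk) (hγk1 : 0 < γk1)
    (xkm1 xk xk1 : EuclideanSpace ℝ (Fin n))
    (H : EuclideanSpace ℝ (Fin n) → EuclideanSpace ℝ (Fin n))
    (hH : H = fun z => z - γk • gradient f z)
    (hxk : IsProx g γk (H xkm1) xk)
    (hxk1 : IsProx g γk1 (xk - γk1 • gradient f xk) xk1)
    (ρ : ℝ) (hρ : ρ = γk1 / γk) :
    ‖xk1 - xk‖ ^ 2 ≤ ρ * ⟪H xkm1 - H xk, xk - xk1⟫ ∧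
      ρ * ⟪H xkm1 - H xk, xk - xk1⟫ ≤ ρ ^ 2 * ‖H xkm1 - H xk‖ ^ 2 := by
  obtain ⟨gxk, hgxk⟩ := prox_finite hgp hxk
  obtain ⟨gxk1, hgxk1⟩ := prox_finite hgp hxk1
  have hA : γk * (gxk - gxk1) ≤ ⟪xk - H xkm1, xk1 - xk⟫ :=
    prox_subgrad hgc hγk hxk hgxk hgxk1
  have hB : γk1 * (gxk1 - gxk) ≤ ⟪xk1 - (xk - γk1 • gradient f xk), xk - xk1⟫ :=
    prox_subgrad hgc hγk1 hxk1 hgxk1 hgxk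
  set w := H xkm1 - H xk with hw
  set d := xk - xk1 with hd
  set v := gradient f xk with hv
  set I : ℝ := ⟪w, d⟫ with hI
  set J : ℝ := ⟪v, d⟫ with hJ
  have eA : ⟪xk - H xkm1, xk1 - xk⟫ = I - γk * J := by
    have hx : xk - H xkm1 = -(w - γk • v) := by
      rw [hw, hH]; simp only; module
    have hx2 : xk1 - xk = -d := by rw [hd]; module
    rw [hx, hx2, inner_neg_neg, inner_sub_left, real_inner_smul_left, hI, hJ]
  have eB : ⟪xk1 - (xk - γk1 • gradient f xk), xk - xk1⟫ = -‖d‖ ^ 2 + γk1 * J := by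
    have hx : xk1 - (xk - γk1 • gradient f xk) = -d + γk1 • v := by
      rw [hd, hv]; module
    rw [show xk - xk1 = d from hd.symm, hx, inner_add_left, inner_neg_left,
      real_inner_self_eq_norm_sq, real_inner_smul_left, hJ]
  rw [eA] at hA
  rw [eB] at hB
  have hρ0 : 0 ≤ ρ := by rw [hρ]; positivity
  have hργk : ρ * γk = γk1 := by rw [hρ]; field_simp
  have part1 : ‖d‖ ^ 2 ≤ ρ * I := by
    nlinarith [mul_le_mul_of_nonneg_left hA hρ0]
  constructor
  · rw [show xk1 - xk = -d by rw [hd]; module, norm_neg]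
    exact part1
  · have hcs : I ≤ ‖w‖ * ‖d‖ := real_inner_le_norm w d
    nlinarith [sq_nonneg (ρ * ‖w‖ - ‖d‖), mul_le_mul_of_nonneg_left hcs hρ0,
      norm_nonneg w, norm_nonneg d]
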